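/- Let R be a left and right noetherian ring, P a maximal two-sided ideal of R, and d ∈ R an element such that: (i) d acts locally ad-nilpotently on R; (ii) the image of d in R/P is a regular element of R/P (neither a left nor a right zero-divisor); and (iii) every element p ∈ P satisfies p·dⁿ = 0 for some n ≥ 1. Then P² = P, and there exists a two-sided ideal J of R with P ∩ J = 0 and P + J = R — so that R ≅ R/P × R/J as rings — such that every element of R/J is annihilated by some power of the image of d. Consequently, every right R-module M decomposes as M ≅ M/MP ⊕ M/MJ. -/

import Mathlib

/-!
STATEMENT 10: let `R` be a (left and right) noetherian ring, `P` a maximal two-sided ideal,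
and `d ∈ R` with (i) `d` locally ad-nilpotent on `R`, (ii) the image of `d` in `R/P`
regular, (iii) every `p ∈ P` killed by a power of `d` on the right.  Then `P² = P` and there
is a two-sided ideal `J` with `P ∩ J = 0`, `P + J = R` (so `R ≅ R/P × R/J` as rings) such
that every element of `R/J` is annihilated by a power of the image of `d`; and every right
`R`-module `M` decomposes as `M ≅ M/MP ⊕ M/MJ`.
-/

open MulOpposite

private lemma stmt10_iter_mul {R : Type*} [Ring R] (d : R) :
    ∀ (k : ℕ) (p : R), (fun a => d * a - a * d)^[k] (p * d) =
      ((fun a => d * a - a * d)^[k] p) * d := by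
  intro k
  induction k with
  | zero => intro p; simp
  | succ k ih =>
    intro p
    rw [Function.iterate_succ_apply, Function.iterate_succ_apply]
    have harg : d * (p * d) - p * d * d = (d * p - p * d) * d := by noncomm_ring
    show (fun a => d * a - a * d)^[k] (d * (p * d) - p * d * d) = _
    rw [harg]
    exact ih (d * p - p * d)

private lemma stmt10_right {R : Type*} [Ring R] (d : R) :
    ∀ (t n N : ℕ) (x r : R), n + N = t → x * d ^ n = 0 →
      (fun a => d * a - a * d)^[N] r = 0 → x * r * d ^ t = 0 := by
  intro t
  induction t using Nat.strong_induction_on with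
  | _ t ih =>
    intro n N x r hnN hx hr
    match N, hnN with
    | 0, hnN =>
      simp only [Function.iterate_zero, id_eq] at hr
      subst hr; simp
    | (N+1), hnN =>
      match n, hnN with
      | 0, hnN =>
        simp only [pow_zero, mul_one] at hx
        subst hx; simp
      | (m+1), hnN =>
        obtain rfl : t = (m + N + 1) + 1 := by omega
        have key : x * r * d ^ ((m + N + 1) + 1)
            = (x * d) * r * d ^ (m + N + 1) - x * (d * r - r * d) * d ^ (m + N + 1) := by
          rw [pow_succ']
          noncomm_ring
        have h1 : (x * d) * r * d ^ (m + N + 1) = 0 := by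
          refine ih (m + N + 1) (by omega) m (N + 1) (x * d) r (by omega) ?_ hr
          rw [mul_assoc, ← pow_succ']; exact hx
        have h2 : x * (d * r - r * d) * d ^ (m + N + 1) = 0 := by
          refine ih (m + N + 1) (by omega) (m + 1) N x ((fun a => d * a - a * d) r)
            (by omega) hx ?_
          rw [← Function.iterate_succ_apply]; exact hr
        rw [key, h1, h2, sub_zero]

private lemma stmt10_left {R : Type*} [Ring R] (d : R) :
    ∀ (t n s : ℕ) (p : R), n + s = t →
      (fun a => d * a - a * d)^[s] p = 0 → p * d ^ n = 0 → d ^ t * p = 0 := by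
  intro t
  induction t using Nat.strong_induction_on with
  | _ t ih =>
    intro n s p hns hs hn
    match s, hns with
    | 0, hns =>
      simp only [Function.iterate_zero, id_eq] at hs
      subst hs; simp
    | (s+1), hns =>
      match n, hns with
      | 0, hns =>
        simp only [pow_zero, mul_one] at hn
        subst hn; simp
      | (m+1), hns =>
        obtain rfl : t = (m + s + 1) + 1 := by omega
        have key : d ^ ((m + s + 1) + 1) * p
            = d ^ (m + s + 1) * (p * d) + d ^ (m + s + 1) * (d * p - p * d) := by
          rw [pow_succ]
          noncomm_ring
        have h1 : d ^ (m + s + 1) * (p * d) = 0 := by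
          refine ih (m + s + 1) (by omega) m (s + 1) (p * d) (by omega) ?_ ?_
          · rw [stmt10_iter_mul d (s+1) p, hs, zero_mul]
          · rw [mul_assoc, ← pow_succ']; exact hn
        have h2 : d ^ (m + s + 1) * (d * p - p * d) = 0 := by
          refine ih (m + s + 1) (by omega) (m + 1) s ((fun a => d * a - a * d) p)
            (by omega) ?_ ?_
          · rw [← Function.iterate_succ_apply]; exact hs
          · show (d * p - p * d) * d ^ (m + 1) = 0
            have h3 : p * (d * d ^ (m + 1)) = 0 := by
              rw [← pow_succ', pow_succ, ← mul_assoc, hn, zero_mul]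
            rw [sub_mul, mul_assoc, hn, mul_zero, mul_assoc, h3, sub_zero]
        rw [key, h1, h2, add_zero]


theorem stmt_10 {R : Type w} [Ring R]
    -- `R` is left and right noetherian
    (hnoeth : IsNoetherian R R) (hnoeth' : IsNoetherian Rᵐᵒᵖ Rᵐᵒᵖ)
    -- `P` is a maximal two-sided ideal of `R`
    (P : TwoSidedIdeal R) (hP : IsCoatom P)
    (d : R)
    -- (i) `d` acts locally ad-nilpotently on `R`
    (had : ∀ a : R, ∃ n : ℕ, (fun a => d * a - a * d)^[n] a = 0)
    -- (ii) the image of `d` in `R/P` is regular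
    (hreg₁ : ∀ y : P.ringCon.Quotient, P.ringCon.mk' d * y = 0 → y = 0)
    (hreg₂ : ∀ y : P.ringCon.Quotient, y * P.ringCon.mk' d = 0 → y = 0)
    -- (iii) every `p ∈ P` satisfies `p·dⁿ = 0` for some `n ≥ 1`
    (htor : ∀ p ∈ P, ∃ n : ℕ, 1 ≤ n ∧ p * d ^ n = 0) :
    -- `P² = P`
    (∀ x : R, x ∈ AddSubgroup.closure {y : R | ∃ p ∈ P, ∃ q ∈ P, y = p * q} ↔ x ∈ P) ∧
    -- the complementary ideal `J`
    ∃ J : TwoSidedIdeal R,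
      P ⊓ J = ⊥ ∧ P ⊔ J = ⊤ ∧
      -- so that `R ≅ R/P × R/J` as rings
      Nonempty (R ≃+* (P.ringCon.Quotient × J.ringCon.Quotient)) ∧
      -- every element of `R/J` is annihilated by some power of the image of `d`
      (∀ y : J.ringCon.Quotient, ∃ n : ℕ, y * (J.ringCon.mk' d) ^ n = 0) ∧
      -- every right `R`-module decomposes as `M ≅ M/MP ⊕ M/MJ`
      (∀ (M : Type w) [AddCommGroup M] [Module Rᵐᵒᵖ M],
        Nonempty (M ≃ₗ[Rᵐᵒᵖ]
          ((M ⧸ Submodule.span Rᵐᵒᵖ {x : M | ∃ m : M, ∃ p ∈ P, x = op p • m}) ×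
           (M ⧸ Submodule.span Rᵐᵒᵖ {x : M | ∃ m : M, ∃ q ∈ J, x = op q • m})))) := by
  classical
  -- monotone chain of right annihilators (left ideals)
  have hmono₁ : ∀ (x : R) (n m : ℕ), n ≤ m → x * d ^ n = 0 → x * d ^ m = 0 := by
    intro x n m h hx
    have : x * d ^ m = x * d ^ n * d ^ (m - n) := by
      rw [mul_assoc, ← pow_add, Nat.add_sub_cancel' h]
    rw [this, hx, zero_mul]
  have hmono₂ : ∀ (x : R) (n m : ℕ), n ≤ m → d ^ n * x = 0 → d ^ m * x = 0 := by
    intro x n m h hx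
    have : d ^ m * x = d ^ (m - n) * (d ^ n * x) := by
      rw [← mul_assoc, ← pow_add, Nat.sub_add_cancel h]
    rw [this, hx, mul_zero]
  -- stabilization on the right
  obtain ⟨N₁, hN₁⟩ := monotone_stabilizes_iff_noetherian.mpr hnoeth
    ⟨fun n => LinearMap.ker (LinearMap.toSpanSingleton R R (d ^ n)),
      by
        intro n m h x hx
        simp only [LinearMap.mem_ker, LinearMap.toSpanSingleton_apply, smul_eq_mul] at hx ⊢
        exact hmono₁ x n m h hx⟩
  have hstab₁ : ∀ (x : R) (n : ℕ), x * d ^ n = 0 → x * d ^ N₁ = 0 := by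
    intro x n hx
    have hx' : x ∈ LinearMap.ker (LinearMap.toSpanSingleton R R (d ^ (max n N₁))) := by
      simp only [LinearMap.mem_ker, LinearMap.toSpanSingleton_apply, smul_eq_mul]
      exact hmono₁ x n _ (le_max_left _ _) hx
    have := hN₁ (max n N₁) (le_max_right _ _)
    change (LinearMap.toSpanSingleton R R (d ^ N₁)).ker =
      (LinearMap.toSpanSingleton R R (d ^ max n N₁)).ker at this
    rw [← this] at hx'
    simpa only [LinearMap.mem_ker, LinearMap.toSpanSingleton_apply, smul_eq_mul] using hx'
  -- stabilization on the left
  have hker : ∀ (n : ℕ) (x : Rᵐᵒᵖ),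
      x ∈ LinearMap.ker (LinearMap.toSpanSingleton Rᵐᵒᵖ Rᵐᵒᵖ (op (d ^ n))) ↔
        d ^ n * unop x = 0 := by
    intro n x
    rw [LinearMap.mem_ker, LinearMap.toSpanSingleton_apply, smul_eq_mul,
      show x * op (d ^ n) = op (d ^ n * unop x) from rfl, op_eq_zero_iff]
  obtain ⟨N₂, hN₂⟩ := monotone_stabilizes_iff_noetherian.mpr hnoeth'
    ⟨fun n => LinearMap.ker (LinearMap.toSpanSingleton Rᵐᵒᵖ Rᵐᵒᵖ (op (d ^ n))),
      by
        intro n m h x hx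
        rw [hker] at hx ⊢
        exact hmono₂ _ n m h hx⟩
  have hstab₂ : ∀ (x : R) (n : ℕ), d ^ n * x = 0 → d ^ N₂ * x = 0 := by
    intro x n hx
    have hx' : op x ∈ LinearMap.ker (LinearMap.toSpanSingleton Rᵐᵒᵖ Rᵐᵒᵖ (op (d ^ (max n N₂)))) := by
      rw [hker, unop_op]
      exact hmono₂ x n _ (le_max_left _ _) hx
    have := hN₂ (max n N₂) (le_max_right _ _)
    change (LinearMap.toSpanSingleton Rᵐᵒᵖ Rᵐᵒᵖ (op (d ^ N₂))).ker =
      (LinearMap.toSpanSingleton Rᵐᵒᵖ Rᵐᵒᵖ (op (d ^ max n N₂))).ker at this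
    rw [← this, hker, unop_op] at hx'
    exact hx'
  set K : ℕ := max N₁ N₂ + 1 with hK
  -- every element of P is killed by d^K on both sides
  have hPr : ∀ p ∈ P, p * d ^ K = 0 := by
    intro p hp
    obtain ⟨n, -, hn⟩ := htor p hp
    exact hmono₁ p N₁ K (by omega) (hstab₁ p n hn)
  have hPl : ∀ p ∈ P, d ^ K * p = 0 := by
    intro p hp
    obtain ⟨n, -, hn⟩ := htor p hp
    obtain ⟨s, hs⟩ := had p
    have := stmt10_left d (n + s) n s p rfl hs hn
    exact hmono₂ p N₂ K (by omega) (hstab₂ p (n + s) this)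
  -- the image of d in R/P
  have hmkP : ∀ x y : R, P.ringCon.mk' x = P.ringCon.mk' y ↔ x - y ∈ P := by
    intro x y
    rw [show P.ringCon.mk' x = (x : P.ringCon.Quotient) from rfl,
      show P.ringCon.mk' y = (y : P.ringCon.Quotient) from rfl,
      RingCon.eq, TwoSidedIdeal.rel_iff]
  have hpow : ∀ m : ℕ, d ^ m ∉ P := by
    intro m
    induction m with
    | zero =>
      intro h
      simp only [pow_zero] at h
      exact hP.1 ((TwoSidedIdeal.one_mem_iff P).mp h)
    | succ m ih =>
      intro h
      refine ih ?_
      have : P.ringCon.mk' (d ^ m) * P.ringCon.mk' d = 0 := by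
        rw [← map_mul, ← pow_succ, show (0 : P.ringCon.Quotient) = P.ringCon.mk' 0 from (map_zero _).symm,
          hmkP, sub_zero]
        exact h
      have := hreg₂ _ this
      rw [show (0 : P.ringCon.Quotient) = P.ringCon.mk' 0 from (map_zero _).symm, hmkP, sub_zero] at this
      exact this
  have hdK : d ^ K ∉ P := hpow K
  -- the complementary ideal J
  set S : Set R := {y : R | ∃ a b : R, y = a * d ^ K * b} with hS
  set Jc : AddSubgroup R := AddSubgroup.closure S with hJc
  have hmulleft : ∀ x y : R, y ∈ Jc → x * y ∈ Jc := by
    intro x y hy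
    induction hy using AddSubgroup.closure_induction with
    | mem z hz =>
      obtain ⟨a, b, rfl⟩ := hz
      exact AddSubgroup.subset_closure ⟨x * a, b, by noncomm_ring⟩
    | zero => simpa using AddSubgroup.zero_mem Jc
    | add z w _ _ hz hw => rw [mul_add]; exact AddSubgroup.add_mem _ hz hw
    | neg z _ hz => rw [mul_neg]; exact AddSubgroup.neg_mem _ hz
  have hmulright : ∀ x y : R, x ∈ Jc → x * y ∈ Jc := by
    intro x y hx
    induction hx using AddSubgroup.closure_induction with
    | mem z hz =>
      obtain ⟨a, b, rfl⟩ := hz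
      exact AddSubgroup.subset_closure ⟨a, b * y, by noncomm_ring⟩
    | zero => simpa using AddSubgroup.zero_mem Jc
    | add z w _ _ hz hw => rw [add_mul]; exact AddSubgroup.add_mem _ hz hw
    | neg z _ hz => rw [neg_mul]; exact AddSubgroup.neg_mem _ hz
  set J : TwoSidedIdeal R := TwoSidedIdeal.mk' Jc (AddSubgroup.zero_mem _)
    (fun hx hy => AddSubgroup.add_mem _ hx hy) (fun hx => AddSubgroup.neg_mem _ hx)
    (fun {x y} hy => hmulleft x y hy) (fun {x y} hx => hmulright x y hx) with hJdef
  have hJ : ∀ x : R, x ∈ J ↔ x ∈ Jc := fun x => TwoSidedIdeal.mem_mk' _ _ _ _ _ _ x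
  have hdKJ : d ^ K ∈ J := (hJ _).mpr (AddSubgroup.subset_closure ⟨1, 1, by simp⟩)
  -- P kills J on both sides
  have hPJ : ∀ x ∈ P, ∀ i ∈ Jc, x * i = 0 := by
    intro x hx i hi
    induction hi using AddSubgroup.closure_induction with
    | mem z hz =>
      obtain ⟨a, b, rfl⟩ := hz
      have : x * a * d ^ K = 0 := hPr (x * a) (P.mul_mem_right x a hx)
      calc x * (a * d ^ K * b) = (x * a * d ^ K) * b := by noncomm_ring
        _ = 0 := by rw [this, zero_mul]
    | zero => simp
    | add z w _ _ hz hw => rw [mul_add, hz, hw, add_zero]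
    | neg z _ hz => rw [mul_neg, hz, neg_zero]
  have hJP : ∀ i ∈ Jc, ∀ x ∈ P, i * x = 0 := by
    intro i hi x hx
    induction hi using AddSubgroup.closure_induction with
    | mem z hz =>
      obtain ⟨a, b, rfl⟩ := hz
      have : d ^ K * (b * x) = 0 := hPl (b * x) (P.mul_mem_left b x hx)
      calc a * d ^ K * b * x = a * (d ^ K * (b * x)) := by noncomm_ring
        _ = 0 := by rw [this, mul_zero]
    | zero => simp
    | add z w _ _ hz hw => rw [add_mul, hz, hw, add_zero]
    | neg z _ hz => rw [neg_mul, hz, neg_zero]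
  -- P ⊔ J = ⊤
  have hsup : P ⊔ J = ⊤ := by
    refine hP.2 (P ⊔ J) (lt_of_le_of_ne le_sup_left ?_)
    intro h
    exact hdK (h ▸ TwoSidedIdeal.mem_sup_right hdKJ)
  obtain ⟨p, hp, u, hu, hpu⟩ : ∃ y ∈ P, ∃ z ∈ J, y + z = 1 := by
    refine TwoSidedIdeal.mem_sup.mp ?_
    rw [hsup]; exact TwoSidedIdeal.mem_top R
  have hu' : u ∈ Jc := (hJ u).mp hu
  -- key identities
  have hxp : ∀ x ∈ P, x = x * p := by
    intro x hx
    have : x * p + x * u = x := by rw [← mul_add, hpu, mul_one]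
    rw [hPJ x hx u hu', add_zero] at this
    exact this.symm
  have hju : ∀ j ∈ Jc, j = j * u := by
    intro j hj
    have : j * p + j * u = j := by rw [← mul_add, hpu, mul_one]
    rw [hJP j hj p hp, zero_add] at this
    exact this.symm
  -- P ⊓ J = ⊥
  have hinf : P ⊓ J = ⊥ := by
    refine le_antisymm ?_ bot_le
    intro x hx
    obtain ⟨hx₁, hx₂⟩ := (TwoSidedIdeal.mem_inf R).mp hx
    have : x = 0 := by
      have := hxp x hx₁
      rwa [hJP x ((hJ x).mp hx₂) p hp] at this
    exact (TwoSidedIdeal.mem_bot R).mpr this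
  -- P² = P
  have hP2 : ∀ x : R, x ∈ AddSubgroup.closure {y : R | ∃ p ∈ P, ∃ q ∈ P, y = p * q} ↔ x ∈ P := by
    intro x
    constructor
    · intro hx
      induction hx using AddSubgroup.closure_induction with
      | mem z hz =>
        obtain ⟨a, ha, b, hb, rfl⟩ := hz
        exact P.mul_mem_left a b hb
      | zero => exact P.zero_mem
      | add z w _ _ hz hw => exact P.add_mem hz hw
      | neg z _ hz => exact P.neg_mem hz
    · intro hx
      rw [hxp x hx]
      exact AddSubgroup.subset_closure ⟨x, hx, p, hp, rfl⟩
  -- the ring equivalence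
  have hmkJ : ∀ x y : R, J.ringCon.mk' x = J.ringCon.mk' y ↔ x - y ∈ J := by
    intro x y
    rw [show J.ringCon.mk' x = (x : J.ringCon.Quotient) from rfl,
      show J.ringCon.mk' y = (y : J.ringCon.Quotient) from rfl,
      RingCon.eq, TwoSidedIdeal.rel_iff]
  have hsurjP : Function.Surjective (P.ringCon.mk') := fun y => Quot.exists_rep y
  have hsurjJ : Function.Surjective (J.ringCon.mk') := fun y => Quot.exists_rep y
  have hbij : Function.Bijective ((P.ringCon.mk').prod (J.ringCon.mk')) := by
    constructor
    · intro x y h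
      rw [Prod.ext_iff] at h
      obtain ⟨h₁, h₂⟩ := h
      simp only [RingHom.prod_apply] at h₁ h₂
      have h₁' := (hmkP x y).mp h₁
      have h₂' := (hmkJ x y).mp h₂
      have : x - y = 0 := by
        have := hxp _ h₁'
        rwa [hJP _ ((hJ _).mp h₂') p hp] at this
      exact sub_eq_zero.mp this
    · rintro ⟨ya, yb⟩
      obtain ⟨a, rfl⟩ := hsurjP ya
      obtain ⟨b, rfl⟩ := hsurjJ yb
      refine ⟨a * u + b * p, ?_⟩
      rw [Prod.ext_iff]
      constructor
      · simp only [RingHom.prod_apply]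
        rw [hmkP]
        have : a * u + b * p - a = b * p - a * p := by
          have hau : a * u = a - a * p := by
            rw [eq_sub_iff_add_eq, ← mul_add, add_comm u p, hpu, mul_one]
          rw [hau]; noncomm_ring
        rw [this]
        exact P.sub_mem (P.mul_mem_left b p hp) (P.mul_mem_left a p hp)
      · simp only [RingHom.prod_apply]
        rw [hmkJ]
        have : a * u + b * p - b = a * u - b * u := by
          have hbp : b * p = b - b * u := by
            rw [eq_sub_iff_add_eq, ← mul_add, hpu, mul_one]
          rw [hbp]; noncomm_ring
        rw [this]
        exact J.sub_mem (J.mul_mem_left a u hu) (J.mul_mem_left b u hu)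
  refine ⟨hP2, J, hinf, hsup, ⟨RingEquiv.ofBijective _ hbij⟩, ?_, ?_⟩
  · -- torsion in R/J
    intro y
    obtain ⟨b, rfl⟩ := hsurjJ y
    refine ⟨K, ?_⟩
    rw [← map_pow, ← map_mul, show (0 : J.ringCon.Quotient) = J.ringCon.mk' 0 from (map_zero _).symm,
      hmkJ, sub_zero]
    exact J.mul_mem_left b (d ^ K) hdKJ
  · -- module decomposition
    intro M _ _
    set MP : Submodule Rᵐᵒᵖ M := Submodule.span Rᵐᵒᵖ {x : M | ∃ m : M, ∃ q ∈ P, x = op q • m} with hMP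
    set MJ : Submodule Rᵐᵒᵖ M := Submodule.span Rᵐᵒᵖ {x : M | ∃ m : M, ∃ q ∈ J, x = op q • m} with hMJ
    -- J kills MP, P kills MJ
    set W : Submodule Rᵐᵒᵖ M :=
      { carrier := {x : M | ∀ j ∈ Jc, op j • x = 0}
        add_mem' := by
          intro a b ha hb j hj
          rw [smul_add, ha j hj, hb j hj, add_zero]
        zero_mem' := by
          intro j hj
          rw [smul_zero]
        smul_mem' := by
          intro c x hx j hj
          rw [smul_smul, show op j * c = op (unop c * j) from rfl]
          exact hx _ (hmulleft (unop c) j hj) } with hWdef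
    have hW : ∀ x ∈ MP, ∀ j ∈ Jc, op j • x = 0 := by
      have hle : MP ≤ W := by
        rw [hMP]
        refine Submodule.span_le.mpr ?_
        rintro _ ⟨m, q, hq, rfl⟩ j hj
        show op j • (op q • m) = 0
        rw [smul_smul, ← op_mul, hPJ q hq j hj, op_zero, zero_smul]
      intro x hx
      exact hle hx
    set W' : Submodule Rᵐᵒᵖ M :=
      { carrier := {x : M | ∀ q ∈ P, op q • x = 0}
        add_mem' := by
          intro a b ha hb q hq
          rw [smul_add, ha q hq, hb q hq, add_zero]
        zero_mem' := by
          intro q hq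
          rw [smul_zero]
        smul_mem' := by
          intro c x hx q hq
          rw [smul_smul, show op q * c = op (unop c * q) from rfl]
          exact hx _ (P.mul_mem_left (unop c) q hq) } with hW'def
    have hW' : ∀ x ∈ MJ, ∀ q ∈ P, op q • x = 0 := by
      have hle : MJ ≤ W' := by
        rw [hMJ]
        refine Submodule.span_le.mpr ?_
        rintro _ ⟨m, j, hj, rfl⟩ q hq
        show op q • (op j • m) = 0
        rw [smul_smul, ← op_mul, hJP j ((hJ j).mp hj) q hq, op_zero, zero_smul]
      intro x hx
      exact hle hx
    have hbijM : Function.Bijective (LinearMap.prod MP.mkQ MJ.mkQ) := by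
      constructor
      · intro x y h
        rw [Prod.ext_iff] at h
        obtain ⟨h₁, h₂⟩ := h
        simp only [LinearMap.prod_apply, Function.prod, Submodule.mkQ_apply] at h₁ h₂
        rw [Submodule.Quotient.eq] at h₁ h₂
        have e1 : op u • (x - y) = 0 := hW _ h₁ u hu'
        have e2 : op p • (x - y) = 0 := hW' _ h₂ p hp
        have e3 : x - y = 0 := by
          have : (op p + op u) • (x - y) = x - y := by
            rw [← op_add, hpu, op_one, one_smul]
          rw [add_smul, e1, e2, add_zero] at this
          exact this.symm
        exact sub_eq_zero.mp e3
      · rintro ⟨ya, yb⟩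
        obtain ⟨a, rfl⟩ := Submodule.Quotient.mk_surjective MP ya
        obtain ⟨b, rfl⟩ := Submodule.Quotient.mk_surjective MJ yb
        refine ⟨op u • a + op p • b, ?_⟩
        rw [Prod.ext_iff]
        simp only [LinearMap.prod_apply, Function.prod, Submodule.mkQ_apply]
        constructor
        · rw [Submodule.Quotient.eq]
          have hau : op u • a = a - op p • a := by
            rw [eq_sub_iff_add_eq, ← add_smul, ← op_add, add_comm u p, hpu, op_one, one_smul]
          have : op u • a + op p • b - a = op p • b - op p • a := by
            rw [hau]; abel
          rw [this]
          exact Submodule.sub_mem _ (Submodule.subset_span ⟨b, p, hp, rfl⟩)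
            (Submodule.subset_span ⟨a, p, hp, rfl⟩)
        · rw [Submodule.Quotient.eq]
          have hbp : op p • b = b - op u • b := by
            rw [eq_sub_iff_add_eq, ← add_smul, ← op_add, hpu, op_one, one_smul]
          have : op u • a + op p • b - b = op u • a - op u • b := by
            rw [hbp]; abel
          rw [this]
          exact Submodule.sub_mem _ (Submodule.subset_span ⟨a, u, hu, rfl⟩)
            (Submodule.subset_span ⟨b, u, hu, rfl⟩)
    exact ⟨LinearEquiv.ofBijective _ hbijM⟩
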